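/- Let z and λ be positive real numbers and set ρ(z) = π^{−1/2}·(Γ(z/2 + 1))^{1/z}, where Γ is the Gamma function. Then ∫_{0}^{∞} exp(−λ·ρ(z)²·y^{2/z}) dy = π^{z/2}·λ^{−z/2}. Equivalently, for the operator D_z = ρ(z)·F·|Y|^{1/z}, where Y is a self-adjoint operator affiliated to a type II_∞ factor with spectral measure Tr(χ_E(Y)) = (1/2)∫_E dy, one has Tr(e^{−λ D_z²}) = π^{z/2}λ^{−z/2} for all λ > 0, which is the defining formula ∫ e^{−λ k²} d^z k = π^{z/2}λ^{−z/2} of Dimensional Regularization in dimension z. -/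

import Mathlib

open MeasureTheory

/-- The DimReg normalization constant `ρ(z) = π^{−1/2}·Γ(z/2 + 1)^{1/z}`. -/
noncomputable def dimRegRho (z : ℝ) : ℝ :=
  Real.pi ^ (-(1 / 2 : ℝ)) * (Real.Gamma (z / 2 + 1)) ^ (1 / z)

/-- **The defining Gaussian identity of Dimensional Regularization in dimension `z`**:
with `ρ(z) = π^{−1/2}Γ(z/2+1)^{1/z}`, one has
`∫_{0}^{∞} exp(−λ·ρ(z)²·y^{2/z}) dy = π^{z/2}·λ^{−z/2}`, i.e.
`Tr(e^{−λD_z²}) = π^{z/2}λ^{−z/2}` for `D_z = ρ(z)·F·|Y|^{1/z}`. -/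
theorem dimreg_gaussian (z lam : ℝ) (hz : 0 < z) (hlam : 0 < lam) :
    (∫ y in Set.Ioi (0 : ℝ), Real.exp (-(lam * dimRegRho z ^ 2 * y ^ (2 / z)))) =
      Real.pi ^ (z / 2) * lam ^ (-(z / 2)) := by
  have hπ : (0 : ℝ) < Real.pi := Real.pi_pos
  have hG : 0 < Real.Gamma (z / 2 + 1) :=
    Real.Gamma_pos_of_pos (by linarith)
  set G := Real.Gamma (z / 2 + 1) with hGdef
  have hρsq : dimRegRho z ^ 2 = Real.pi ^ (-(1 : ℝ)) * G ^ (2 / z) := by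
    rw [dimRegRho, mul_pow, ← Real.rpow_natCast (Real.pi ^ (-(1 / 2 : ℝ))) 2,
      ← Real.rpow_natCast (G ^ (1 / z)) 2,
      ← Real.rpow_mul hπ.le, ← Real.rpow_mul hG.le]
    norm_num
    left
    rw [inv_mul_eq_div]
  have hp : (0 : ℝ) < 2 / z := by positivity
  have hb : (0 : ℝ) < lam * dimRegRho z ^ 2 := by
    rw [hρsq]; positivity
  have key : (∫ y in Set.Ioi (0 : ℝ),
      Real.exp (-(lam * dimRegRho z ^ 2) * y ^ (2 / z))) =
      (lam * dimRegRho z ^ 2) ^ (-1 / (2 / z)) * Real.Gamma (1 / (2 / z) + 1) :=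
    integral_exp_neg_mul_rpow hp hb
  simp only [neg_mul] at key
  rw [key]
  have h1 : (1 : ℝ) / (2 / z) = z / 2 := by field_simp
  have h2 : (-1 : ℝ) / (2 / z) = -(z / 2) := by field_simp
  rw [h1, h2, hρsq, ← hGdef]
  rw [Real.mul_rpow hlam.le (by positivity),
    Real.mul_rpow (by positivity) (by positivity),
    ← Real.rpow_mul hπ.le, ← Real.rpow_mul hG.le]
  have h3 : (-(1 : ℝ)) * -(z / 2) = z / 2 := by ring
  have h4 : (2 / z) * -(z / 2) = -1 := by field_simp
  rw [h3, h4, Real.rpow_neg_one]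
  field_simp
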